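/- arXiv:1505.05493 — 3 statements merged into one kernel-verified Lean document; each statement's English description precedes it below -/
import Mathlib

section
/- Let μ be a probability measure on ℝ, β ∈ [0,1], m > 0, h > 0, α ∈ (0,1). Suppose that for all x ≥ m, μ([x + h/x^β, ∞)) ≤ α μ([x,∞)). Then for all x ≥ m, ∫_x^∞ y^β μ([y,∞)) dy ≤ (K/(1-α)) μ([x,∞)), where K = h(1 + h/m^(β+1))^β. -/
open MeasureTheory Set

theorem stmt1 (μ : Measure ℝ) [IsProbabilityMeasure μ] (β m h α : ℝ)
    (hβ : β ∈ Set.Icc (0:ℝ) 1) (hm : 0 < m) (hh : 0 < h) (hα : α ∈ Set.Ioo (0:ℝ) 1)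
    (htail : ∀ x ≥ m, (μ (Ici (x + h / x ^ β))).toReal ≤ α * (μ (Ici x)).toReal) :
    ∀ x ≥ m, (∫ y in Ici x, y ^ β * (μ (Ici y)).toReal) ≤
      (h * (1 + h / m ^ (β + 1)) ^ β / (1 - α)) * (μ (Ici x)).toReal := by
  obtain ⟨hβ0, hβ1⟩ := hβ
  obtain ⟨hα0, hα1⟩ := hα
  intro x hx
  set K : ℝ := h * (1 + h / m ^ (β + 1)) ^ β with hKdef
  have hK0 : 0 ≤ K := mul_nonneg hh.le (Real.rpow_nonneg (by positivity) β)
  -- the sequence x₀ = x, xₙ₊₁ = xₙ + h / xₙ^β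
  set f : ℕ → ℝ := fun n => Nat.rec x (fun _ a => a + h / a ^ β) n with hfdef
  have hfs : ∀ n, f (n + 1) = f n + h / f n ^ β := fun n => rfl
  have hf0 : f 0 = x := rfl
  have hfm : ∀ n, m ≤ f n := by
    intro n; induction n with
    | zero => exact hx
    | succ n ih =>
      rw [hfs]
      have : 0 < h / f n ^ β := div_pos hh (Real.rpow_pos_of_pos (hm.trans_le ih) β)
      linarith
  have hflt : ∀ n, f n < f (n + 1) := by
    intro n
    rw [hfs]
    have : 0 < h / f n ^ β := div_pos hh (Real.rpow_pos_of_pos (hm.trans_le (hfm n)) β)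
    linarith
  -- unboundedness of the sequence
  have hub : ∀ y, x ≤ y → ∃ n, y < f n := by
    intro y hy
    have hy0 : 0 < y := lt_of_lt_of_le hm (hx.trans hy)
    have hc : 0 < h / y ^ β := div_pos hh (Real.rpow_pos_of_pos hy0 β)
    have key : ∀ n : ℕ, y < f n ∨ x + n * (h / y ^ β) ≤ f n := by
      intro n; induction n with
      | zero => right; simp [hf0]
      | succ n ih =>
        rcases ih with h1 | h1
        · exact Or.inl (h1.trans (hflt n))
        · by_cases h2 : y < f (n + 1)
          · exact Or.inl h2
          · right
            push_neg at h2
            have hfn : f n ≤ y := (hflt n).le.trans h2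
            have hpow : f n ^ β ≤ y ^ β :=
              Real.rpow_le_rpow (hm.trans_le (hfm n)).le hfn hβ0
            have hdiv : h / y ^ β ≤ h / f n ^ β := by
              gcongr
              exact Real.rpow_pos_of_pos (hm.trans_le (hfm n)) β
            rw [hfs]
            push_cast
            linarith
    obtain ⟨n, hn⟩ := exists_nat_gt ((y - x) / (h / y ^ β))
    rcases key n with h1 | h1
    · exact ⟨n, h1⟩
    · refine ⟨n, lt_of_lt_of_le ?_ h1⟩
      have := (div_lt_iff₀ hc).mp hn
      linarith
  -- the intervals cover [x, ∞)
  have hcover : Ici x ⊆ ⋃ n, Ico (f n) (f (n + 1)) := by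
    intro y hy
    classical
    have hex : ∃ n, y < f n := hub y hy
    have hNs : y < f (Nat.find hex) := Nat.find_spec hex
    have hN0 : Nat.find hex ≠ 0 := by
      intro h0
      rw [h0, hf0] at hNs
      exact absurd hNs (not_lt.mpr hy)
    obtain ⟨k, hk⟩ := Nat.exists_eq_succ_of_ne_zero hN0
    have hkl : ¬ y < f k := Nat.find_min hex (by omega)
    rw [hk] at hNs
    exact mem_iUnion.mpr ⟨k, ⟨not_lt.mp hkl, hNs⟩⟩
  -- geometric decay of tails
  have hstep : ∀ n, μ (Ici (f (n + 1))) ≤ ENNReal.ofReal α * μ (Ici (f n)) := by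
    intro n
    have ht := htail (f n) (hfm n)
    rw [← hfs] at ht
    calc μ (Ici (f (n + 1))) = ENNReal.ofReal (μ (Ici (f (n + 1)))).toReal :=
          (ENNReal.ofReal_toReal (measure_ne_top μ _)).symm
      _ ≤ ENNReal.ofReal (α * (μ (Ici (f n))).toReal) := ENNReal.ofReal_le_ofReal ht
      _ = ENNReal.ofReal α * μ (Ici (f n)) := by
          rw [ENNReal.ofReal_mul hα0.le, ENNReal.ofReal_toReal (measure_ne_top μ _)]
  have hgeo : ∀ n, μ (Ici (f n)) ≤ ENNReal.ofReal α ^ n * μ (Ici x) := by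
    intro n; induction n with
    | zero => simp [hf0]
    | succ n ih =>
      calc μ (Ici (f (n + 1))) ≤ ENNReal.ofReal α * μ (Ici (f n)) := hstep n
        _ ≤ ENNReal.ofReal α * (ENNReal.ofReal α ^ n * μ (Ici x)) := by gcongr
        _ = ENNReal.ofReal α ^ (n + 1) * μ (Ici x) := by ring
  -- the key real inequality per interval
  have hKn : ∀ n, f (n + 1) ^ β * (h / f n ^ β) ≤ K := by
    intro n
    have ha : 0 < f n := hm.trans_le (hfm n)
    have hb : 0 < f (n + 1) := hm.trans_le (hfm (n + 1))
    have e1 : f (n + 1) ^ β * (h / f n ^ β) = h * ((f (n + 1) / f n) ^ β) := by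
      rw [Real.div_rpow hb.le ha.le]; ring
    have e2 : f (n + 1) / f n = 1 + h / f n ^ (β + 1) := by
      rw [hfs, Real.rpow_add_one ha.ne']
      have hpa : (0:ℝ) < f n ^ β := Real.rpow_pos_of_pos ha β
      field_simp
    have h3 : h / f n ^ (β + 1) ≤ h / m ^ (β + 1) :=
      div_le_div_of_nonneg_left hh.le (Real.rpow_pos_of_pos hm _)
        (Real.rpow_le_rpow hm.le (hfm n) (by linarith))
    rw [e1, e2, hKdef]
    have : (1 + h / f n ^ (β + 1)) ^ β ≤ (1 + h / m ^ (β + 1)) ^ β := by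
      apply Real.rpow_le_rpow ?_ (by linarith) hβ0
      have : 0 < h / f n ^ (β + 1) := div_pos hh (Real.rpow_pos_of_pos ha _)
      linarith
    exact mul_le_mul_of_nonneg_left this hh.le
  -- measurability
  have hanti : Antitone fun y : ℝ => μ (Ici y) := fun a b hab =>
    measure_mono (Ici_subset_Ici.mpr hab)
  have hmeasμ : Measurable fun y : ℝ => μ (Ici y) := hanti.measurable
  have hmeasr : Measurable fun y : ℝ => y ^ β := (Real.continuous_rpow_const hβ0).measurable
  have hsm : AEStronglyMeasurable (fun y : ℝ => y ^ β * (μ (Ici y)).toReal)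
      (volume.restrict (Ici x)) :=
    (hmeasr.mul (ENNReal.measurable_toReal.comp hmeasμ)).aestronglyMeasurable
  have hnn : 0 ≤ᵐ[volume.restrict (Ici x)] fun y : ℝ => y ^ β * (μ (Ici y)).toReal := by
    filter_upwards [ae_restrict_mem measurableSet_Ici] with y hy
    have hy0 : (0:ℝ) < y := hm.trans_le (hx.trans hy)
    exact mul_nonneg (Real.rpow_nonneg hy0.le β) ENNReal.toReal_nonneg
  rw [integral_eq_lintegral_of_nonneg_ae hnn hsm]
  have h1α : (0:ℝ) < 1 - α := by linarith
  apply ENNReal.toReal_le_of_le_ofReal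
    (mul_nonneg (div_nonneg hK0 h1α.le) ENNReal.toReal_nonneg)
  have hcongr : (∫⁻ y in Ici x, ENNReal.ofReal (y ^ β * (μ (Ici y)).toReal))
      = ∫⁻ y in Ici x, ENNReal.ofReal (y ^ β) * μ (Ici y) := by
    apply setLIntegral_congr_fun measurableSet_Ici
    intro y hy
    have hy0 : (0:ℝ) ≤ y := (hm.trans_le (hx.trans hy)).le
    show ENNReal.ofReal (y ^ β * (μ (Ici y)).toReal) = ENNReal.ofReal (y ^ β) * μ (Ici y)
    rw [ENNReal.ofReal_mul (Real.rpow_nonneg hy0 β),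
      ENNReal.ofReal_toReal (measure_ne_top μ _)]
  rw [hcongr]
  calc (∫⁻ y in Ici x, ENNReal.ofReal (y ^ β) * μ (Ici y))
      ≤ ∫⁻ y in ⋃ n, Ico (f n) (f (n + 1)), ENNReal.ofReal (y ^ β) * μ (Ici y) :=
        lintegral_mono_set hcover
    _ ≤ ∑' n, ∫⁻ y in Ico (f n) (f (n + 1)), ENNReal.ofReal (y ^ β) * μ (Ici y) :=
        lintegral_iUnion_le _ _
    _ ≤ ∑' n, ENNReal.ofReal K * (ENNReal.ofReal α ^ n * μ (Ici x)) := by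
        apply ENNReal.tsum_le_tsum
        intro n
        have hd : f (n + 1) - f n = h / f n ^ β := by rw [hfs]; ring
        calc (∫⁻ y in Ico (f n) (f (n + 1)), ENNReal.ofReal (y ^ β) * μ (Ici y))
            ≤ ∫⁻ _ in Ico (f n) (f (n + 1)),
                ENNReal.ofReal (f (n + 1) ^ β) * μ (Ici (f n)) := by
              apply setLIntegral_mono measurable_const
              intro y hy
              have hy0 : (0:ℝ) ≤ y := le_trans (hm.trans_le (hfm n)).le hy.1
              exact mul_le_mul'
                (ENNReal.ofReal_le_ofReal (Real.rpow_le_rpow hy0 hy.2.le hβ0))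
                (measure_mono (Ici_subset_Ici.mpr hy.1))
          _ = ENNReal.ofReal (f (n + 1) ^ β) * μ (Ici (f n)) * ENNReal.ofReal (h / f n ^ β) := by
              rw [setLIntegral_const, Real.volume_Ico, hd]
          _ = ENNReal.ofReal (f (n + 1) ^ β * (h / f n ^ β)) * μ (Ici (f n)) := by
              rw [ENNReal.ofReal_mul (Real.rpow_nonneg (hm.trans_le (hfm (n + 1))).le β)]
              ring
          _ ≤ ENNReal.ofReal K * μ (Ici (f n)) :=
              mul_le_mul' (ENNReal.ofReal_le_ofReal (hKn n)) le_rfl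
          _ ≤ ENNReal.ofReal K * (ENNReal.ofReal α ^ n * μ (Ici x)) :=
              mul_le_mul' le_rfl (hgeo n)
    _ = ENNReal.ofReal K * ((1 - ENNReal.ofReal α)⁻¹ * μ (Ici x)) := by
        rw [ENNReal.tsum_mul_left, ENNReal.tsum_mul_right, ENNReal.tsum_geometric]
    _ = ENNReal.ofReal (K / (1 - α) * (μ (Ici x)).toReal) := by
        rw [ENNReal.ofReal_mul (div_nonneg hK0 h1α.le), div_eq_mul_inv,
          ENNReal.ofReal_mul hK0, ENNReal.ofReal_inv_of_pos h1α,
          ENNReal.ofReal_sub _ hα0.le, ENNReal.ofReal_one,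
          ENNReal.ofReal_toReal (measure_ne_top μ _), mul_assoc]
end

section
/- For β ∈ (0,1], let H_β(t) = max{t², |t|^((β+1)/β)} for t ∈ ℝ. Then the Legendre transform H_β*(t) = sup_s (ts − H_β(s)) is given by: H_β*(t) = t²/4 if |t| ≤ 2; H_β*(t) = |t| − 1 if 2 ≤ |t| ≤ (β+1)/β; and H_β*(t) = (1/β)(β|t|/(β+1))^(1+β) if |t| ≥ (β+1)/β. -/
open Real

private lemma mySup_eq {f : ℝ → ℝ} {M : ℝ} (h : ∀ s, f s ≤ M) (h2 : ∃ s, f s = M) :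
    (⨆ s, f s) = M := by
  obtain ⟨s, hs⟩ := h2
  exact le_antisymm (ciSup_le h) (hs ▸ le_ciSup ⟨M, fun y ⟨u, hu⟩ => hu ▸ h u⟩ s)

/-- tangent line inequality for rpow -/
private lemma myTangent {p : ℝ} (hp : 1 ≤ p) {a u : ℝ} (ha : 0 < a) (hu : 0 ≤ u) :
    a ^ p + p * a ^ (p - 1) * (u - a) ≤ u ^ p := by
  have h := one_add_mul_self_le_rpow_one_add (s := u / a - 1)
    (by have : 0 ≤ u / a := div_nonneg hu ha.le; linarith) hp
  rw [show (1 : ℝ) + (u / a - 1) = u / a by ring, Real.div_rpow hu ha.le] at h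
  have hap : 0 < a ^ p := Real.rpow_pos_of_pos ha p
  have h2 := mul_le_mul_of_nonneg_left h hap.le
  rw [mul_div_cancel₀ _ hap.ne'] at h2
  have h1 : a ^ (p - 1) = a ^ p / a := Real.rpow_sub_one ha.ne' p
  calc a ^ p + p * a ^ (p - 1) * (u - a)
      = a ^ p * (1 + p * (u / a - 1)) := by rw [h1]; field_simp
    _ ≤ u ^ p := h2

private lemma myH_eq_sq {p : ℝ} (hp : 2 ≤ p) {s : ℝ} (hs : |s| ≤ 1) :
    max (s ^ 2) (|s| ^ p) = s ^ 2 := by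
  apply max_eq_left
  rcases eq_or_lt_of_le (abs_nonneg s) with h0 | h0
  · rw [← h0, Real.zero_rpow (by positivity)]; positivity
  · calc |s| ^ p ≤ |s| ^ (2 : ℝ) := Real.rpow_le_rpow_of_exponent_ge h0 hs hp
      _ = s ^ 2 := by rw [show (2:ℝ) = ((2:ℕ):ℝ) by norm_num, Real.rpow_natCast, sq_abs]

private lemma myH_eq_rpow {p : ℝ} (hp : 2 ≤ p) {s : ℝ} (hs : 1 ≤ |s|) :
    max (s ^ 2) (|s| ^ p) = |s| ^ p := by
  apply max_eq_right
  calc s ^ 2 = |s| ^ (2 : ℝ) := by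
        rw [show (2:ℝ) = ((2:ℕ):ℝ) by norm_num, Real.rpow_natCast, sq_abs]
    _ ≤ |s| ^ p := Real.rpow_le_rpow_of_exponent_le hs hp

theorem stmt5 (β : ℝ) (hβ : β ∈ Set.Ioc (0:ℝ) 1) (t : ℝ) :
    (|t| ≤ 2 →
      (⨆ s : ℝ, (t * s - max (s ^ 2) (|s| ^ ((β + 1) / β)))) = t ^ 2 / 4) ∧
    (2 ≤ |t| → |t| ≤ (β + 1) / β →
      (⨆ s : ℝ, (t * s - max (s ^ 2) (|s| ^ ((β + 1) / β)))) = |t| - 1) ∧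
    ((β + 1) / β ≤ |t| →
      (⨆ s : ℝ, (t * s - max (s ^ 2) (|s| ^ ((β + 1) / β)))) =
        (1 / β) * (β * |t| / (β + 1)) ^ (1 + β)) := by
  obtain ⟨hβ0, hβ1⟩ := hβ
  set p := (β + 1) / β with hpdef
  have hp2 : 2 ≤ p := by
    show (2:ℝ) ≤ (β + 1) / β
    rw [le_div_iff₀ hβ0]; nlinarith
  have hp1 : (1:ℝ) ≤ p := by linarith
  have hp0 : 0 < p := by linarith
  refine ⟨fun h1 => ?_, fun h2a h2b => ?_, fun h3 => ?_⟩
  · -- case |t| ≤ 2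
    apply mySup_eq
    · intro s
      have hmax : s ^ 2 ≤ max (s ^ 2) (|s| ^ p) := le_max_left _ _
      nlinarith [sq_nonneg (s - t / 2), sq_nonneg (t/2)]
    · refine ⟨t / 2, ?_⟩
      rw [myH_eq_sq hp2 (by rw [abs_div, abs_two]; linarith)]
      ring
  · -- case 2 ≤ |t| ≤ p
    apply mySup_eq
    · intro s
      have hts : t * s ≤ |t| * |s| := by
        calc t * s ≤ |t * s| := le_abs_self _
          _ = |t| * |s| := abs_mul t s
      rcases le_total |s| 1 with hs | hs
      · rw [myH_eq_sq hp2 hs]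
        have : s ^ 2 = |s| ^ 2 := (sq_abs s).symm
        nlinarith [abs_nonneg s]
      · rw [myH_eq_rpow hp2 hs]
        have htan := myTangent hp1 (a := 1) one_pos (abs_nonneg s)
        rw [Real.one_rpow, Real.one_rpow] at htan
        nlinarith
    · rcases le_or_gt 0 t with ht | ht
      · refine ⟨1, ?_⟩
        rw [show max ((1:ℝ) ^ 2) (|(1:ℝ)| ^ p) = 1 by rw [abs_one, Real.one_rpow, one_pow, max_self],
          abs_of_nonneg ht]; ring
      · refine ⟨-1, ?_⟩
        rw [show max ((-1:ℝ) ^ 2) (|(-1:ℝ)| ^ p) = 1 by rw [abs_neg, abs_one, Real.one_rpow, neg_one_sq, max_self],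
          abs_of_neg ht]; ring
  · -- case p ≤ |t|
    have hT0 : 0 < |t| := lt_of_lt_of_le hp0 h3
    set T := |t| with hTdef
    have hA0 : 0 < T / p := div_pos hT0 hp0
    set a := (T / p) ^ β with hadef
    have ha0 : 0 < a := Real.rpow_pos_of_pos hA0 β
    have ha1 : 1 ≤ a := by
      calc (1:ℝ) = 1 ^ β := (Real.one_rpow β).symm
        _ ≤ a := Real.rpow_le_rpow zero_le_one ((one_le_div hp0).2 h3) hβ0.le
    have hpa : p * a ^ (p - 1) = T := by
      have h1 : a ^ (p - 1) = (T / p) ^ (β * (p - 1)) := by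
        rw [hadef, ← Real.rpow_mul hA0.le]
      have h2 : β * (p - 1) = 1 := by
        rw [hpdef]; field_simp; ring
      rw [h1, h2, Real.rpow_one, mul_div_cancel₀ _ hp0.ne']
    have hap : a ^ p = (T / p) ^ (β + 1) := by
      rw [hadef, ← Real.rpow_mul hA0.le]
      congr 1
      rw [hpdef]; field_simp
    have hval : T * a - a ^ p = (1 / β) * (β * T / (β + 1)) ^ (1 + β) := by
      have hAeq : β * T / (β + 1) = T / p := by
        rw [hpdef, div_div_eq_mul_div, mul_comm]
      rw [hAeq, hap, add_comm (1:ℝ) β, Real.rpow_add hA0 β 1, Real.rpow_one, hadef]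
      have hTa : T = (T / p) * p := (div_mul_cancel₀ T hp0.ne').symm
      have : T - T / p = (1 / β) * (T / p) := by
        rw [hpdef]; field_simp; ring
      nlinarith [Real.rpow_pos_of_pos hA0 β]
    apply mySup_eq
    · intro s
      have hts : t * s ≤ T * |s| := by
        calc t * s ≤ |t * s| := le_abs_self _
          _ = T * |s| := abs_mul t s
      have hmax : |s| ^ p ≤ max (s ^ 2) (|s| ^ p) := le_max_right _ _
      have htan := myTangent hp1 ha0 (abs_nonneg s)
      rw [hpa] at htan
      rw [← hval]
      linarith
    · refine ⟨(if 0 ≤ t then a else -a), ?_⟩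
      rcases le_or_gt 0 t with ht | ht
      · rw [if_pos ht]
        rw [show max (a ^ 2) (|a| ^ p) = |a| ^ p from myH_eq_rpow hp2 (by rw [abs_of_pos ha0]; exact ha1),
          abs_of_pos ha0, ← hval, hTdef, abs_of_nonneg ht]
      · rw [if_neg (not_le.2 ht)]
        rw [show max ((-a) ^ 2) (|-a| ^ p) = |-a| ^ p from myH_eq_rpow hp2 (by rw [abs_neg, abs_of_pos ha0]; exact ha1),
          abs_neg, abs_of_pos ha0, ← hval, hTdef, abs_of_neg ht]
        ring
end

section
/- For every β ∈ [0,1] and every t ∈ ℝ, the Legendre transform H_β* of H_β(s) = max{s², |s|^((β+1)/β)} (with H_0(s) = s² for |s| ≤ 1 and +∞ otherwise) satisfies H_β*(t) ≥ (3/16) min{t², |t|^(1+β)}. -/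
noncomputable def Hfun (β s : ℝ) : EReal :=
  if β = 0 then (if |s| ≤ 1 then ((s ^ 2 : ℝ) : EReal) else ⊤)
  else ((max (s ^ 2) (|s| ^ ((β + 1) / β)) : ℝ) : EReal)

lemma key (β t s h : ℝ) (hH : Hfun β s = ((h : ℝ) : EReal))
    (hle : 3 / 16 * min (t ^ 2) (|t| ^ (1 + β)) ≤ t * s - h) :
    ((3 / 16 * min (t ^ 2) (|t| ^ (1 + β)) : ℝ) : EReal) ≤
      ⨆ s : ℝ, (((t * s : ℝ) : EReal) - Hfun β s) := by
  refine le_trans ?_ (le_iSup (fun s => (((t * s : ℝ) : EReal) - Hfun β s)) s)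
  rw [hH, ← EReal.coe_sub]
  exact_mod_cast hle

theorem stmt6 (β : ℝ) (hβ : β ∈ Set.Icc (0:ℝ) 1) (t : ℝ) :
    ((3 / 16 * min (t ^ 2) (|t| ^ (1 + β)) : ℝ) : EReal) ≤
      ⨆ s : ℝ, (((t * s : ℝ) : EReal) - Hfun β s) := by
  obtain ⟨hβ0, hβ1⟩ := hβ
  have hmin1 : min (t ^ 2) (|t| ^ (1 + β)) ≤ t ^ 2 := min_le_left _ _
  have hmin2 : min (t ^ 2) (|t| ^ (1 + β)) ≤ |t| ^ (1 + β) := min_le_right _ _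
  by_cases ht : |t| ≤ 2
  · -- witness s = t/2
    have habs : |t / 2| ≤ 1 := by rw [abs_div]; simp [abs_of_pos]; linarith [abs_nonneg t]
    have hH : Hfun β (t / 2) = (((t / 2) ^ 2 : ℝ) : EReal) := by
      unfold Hfun
      by_cases hb : β = 0
      · simp [hb, habs]
      · have hβpos : 0 < β := lt_of_le_of_ne hβ0 (Ne.symm hb)
        have hp2 : (2 : ℝ) ≤ (β + 1) / β := by
          rw [le_div_iff₀ hβpos]; linarith
        have hmax : |t / 2| ^ ((β + 1) / β) ≤ (t / 2) ^ 2 := by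
          rcases eq_or_lt_of_le (abs_nonneg (t / 2)) with h0 | h0
          · rw [← h0, Real.zero_rpow (by positivity)]
            positivity
          · calc |t / 2| ^ ((β + 1) / β) ≤ |t / 2| ^ (2 : ℝ) :=
                  Real.rpow_le_rpow_of_exponent_ge h0 habs hp2
              _ = (t / 2) ^ 2 := by rw [Real.rpow_two, sq_abs]
        simp [hb, max_eq_left hmax]
    refine key β t (t / 2) ((t / 2) ^ 2) hH ?_
    nlinarith [sq_nonneg t]
  · push_neg at ht
    have htpos : 0 < |t| := by linarith
    have htne : t ≠ 0 := by intro h; rw [h] at ht; simp at ht; linarith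
    by_cases hb : β = 0
    · -- witness s = t / |t|
      have hs1 : abs (t / |t|) = 1 := by
        rw [abs_div, abs_abs, div_self (ne_of_gt htpos)]
      have hH : Hfun β (t / |t|) = ((1 : ℝ) : EReal) := by
        unfold Hfun
        have : (t / |t|) ^ 2 = 1 := by rw [← sq_abs, hs1]; norm_num
        simp [hb, hs1, this]
      refine key β t (t / |t|) 1 hH ?_
      have hts : t * (t / |t|) = |t| := by
        field_simp
        exact (sq_abs t).symm
      rw [hts]
      subst hb
      have h : min (t ^ 2) (|t| ^ (1 + (0:ℝ))) ≤ |t| := by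
        simpa using hmin2
      generalize min (t ^ 2) (|t| ^ (1 + (0:ℝ))) = m at h ⊢
      linarith
    · -- witness s = (t/|t|) * (|t|/2)^β
      have hβpos : 0 < β := lt_of_le_of_ne hβ0 (Ne.symm hb)
      set a : ℝ := |t| / 2 with ha
      have ha1 : 1 < a := by rw [ha]; linarith
      have ha0 : 0 < a := by linarith
      set s : ℝ := (t / |t|) * a ^ β with hs
      have hsabs : |s| = a ^ β := by
        rw [hs, abs_mul, abs_div, abs_abs, div_self (ne_of_gt htpos), one_mul,
          abs_of_pos (Real.rpow_pos_of_pos ha0 β)]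
      have hsab1 : 1 ≤ a ^ β := Real.one_le_rpow ha1.le hβ0
      have hp2 : (2 : ℝ) ≤ (β + 1) / β := by rw [le_div_iff₀ hβpos]; linarith
      have hrp : |s| ^ ((β + 1) / β) = a ^ (β + 1) := by
        rw [hsabs, ← Real.rpow_mul ha0.le]
        congr 1
        field_simp
      have hmax : s ^ 2 ≤ |s| ^ ((β + 1) / β) := by
        rw [← sq_abs, ← Real.rpow_two]
        calc |s| ^ (2:ℝ) ≤ |s| ^ ((β + 1) / β) :=
              Real.rpow_le_rpow_of_exponent_le (by rw [hsabs]; exact hsab1) hp2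
          _ = _ := rfl
      have hH : Hfun β s = ((a ^ (β + 1) : ℝ) : EReal) := by
        unfold Hfun
        rw [if_neg hb, max_eq_right hmax, hrp]
      refine key β t s (a ^ (β + 1)) hH ?_
      have hts : t * s = 2 * a * a ^ β := by
        have h1 : t * t = |t| * |t| := (abs_mul_abs_self t).symm
        have h2 : |t| = 2 * a := by rw [ha]; ring
        rw [hs]
        field_simp
        linear_combination h1 + a ^ β * |t| * h2
      have haβ1 : a ^ (β + 1) = a * a ^ β := by
        rw [Real.rpow_add ha0, Real.rpow_one]; ring
      have h2β : |t| ^ (1 + β) ≤ 4 * a ^ (1 + β) := by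
        have : |t| = 2 * a := by rw [ha]; ring
        rw [this, Real.mul_rpow (by norm_num) ha0.le]
        have h24 : (2:ℝ) ^ (1 + β) ≤ 4 := by
          calc (2:ℝ) ^ (1 + β) ≤ 2 ^ (2:ℝ) :=
                Real.rpow_le_rpow_of_exponent_le (by norm_num) (by linarith)
            _ = 4 := by norm_num [Real.rpow_two]
        nlinarith [Real.rpow_pos_of_pos ha0 (1 + β)]
      have hcomm : a ^ (1 + β) = a ^ (β + 1) := by rw [add_comm]
      rw [hts, haβ1]
      rw [hcomm] at h2β
      nlinarith [Real.rpow_pos_of_pos ha0 (β + 1)]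
end
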